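/- Fix β>0, λ>0, V_FCFS ≥ 1/2, V_PS > 0. For every s>0 define f(s) := μ_SR(s) via the quadratic-root formula and g(s) := μ_DM(s) = β(λ + V_PS/s). Then both f and g are strictly decreasing functions of s on (0,∞). -/
import Mathlib

private lemma key_root (β lam V s : ℝ) (hβ : 0 < β) (hlam : 0 < lam)
    (hV : 1/2 ≤ V) (hs : 0 < s) :
    lam*β < ((s*lam+1)*β + Real.sqrt ((s*lam+1)^2*β^2 + 4*s*lam*β^2*(V-1))) / (2*s) ∧
    s*(((s*lam+1)*β + Real.sqrt ((s*lam+1)^2*β^2 + 4*s*lam*β^2*(V-1))) / (2*s))^2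
      - β*(s*lam+1)*(((s*lam+1)*β + Real.sqrt ((s*lam+1)^2*β^2 + 4*s*lam*β^2*(V-1))) / (2*s))
      + lam*β^2*(1-V) = 0 := by
  set D : ℝ := (s*lam+1)^2*β^2 + 4*s*lam*β^2*(V-1) with hDdef
  have hsl : 0 < s * lam := mul_pos hs hlam
  have hβ2 : 0 < β^2 := by positivity
  have hD : 0 < D := by
    have h1 : 4*s*lam*(V-1) ≥ -(2*(s*lam)) := by nlinarith
    nlinarith [sq_nonneg (s*lam - 1)]
  set r : ℝ := Real.sqrt D with hrdef
  have hr0 : 0 < r := Real.sqrt_pos.mpr hD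
  have hr2 : r^2 = D := Real.sq_sqrt hD.le
  set μ : ℝ := ((s*lam+1)*β + r) / (2*s) with hμdef
  have h2s : (0:ℝ) < 2*s := by linarith
  have hμ2 : 2*s*μ = (s*lam+1)*β + r := by
    rw [hμdef]; field_simp
  -- the quadratic identity
  have h1 : (2*s*μ - (s*lam+1)*β)^2 = D := by
    rw [show 2*s*μ - (s*lam+1)*β = r by linarith]; exact hr2
  have hquad : s*μ^2 - β*(s*lam+1)*μ + lam*β^2*(1-V) = 0 := by
    have h2 : s * (s*μ^2 - β*(s*lam+1)*μ + lam*β^2*(1-V)) = 0 := by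
      linear_combination h1/4
    rcases mul_eq_zero.mp h2 with h | h
    · linarith
    · exact h
  refine ⟨?_, hquad⟩
  -- μ > lam*β ; key: r > β*(s*lam - 1)
  have hrgt : β*(s*lam - 1) < r := by
    rcases le_or_gt (β*(s*lam - 1)) 0 with h | h
    · exact lt_of_le_of_lt h hr0
    · rw [hrdef]
      rw [show β*(s*lam-1) < Real.sqrt D ↔ (β*(s*lam-1))^2 < D from
        Real.lt_sqrt h.le]
      have hV0 : 0 < V := by linarith
      have hK : 0 < lam*β^2*V := by positivity
      nlinarith
  have : 2*s*(lam*β) < 2*s*μ := by rw [hμ2]; nlinarith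
  exact lt_of_mul_lt_mul_left (by linarith) h2s.le

theorem controls_strictly_decreasing (β lam VFCFS VPS : ℝ)
    (hβ : 0 < β) (hlam : 0 < lam) (hVF : 1/2 ≤ VFCFS) (hVP : 0 < VPS) :
    let μSR := fun s : ℝ =>
      ((s*lam+1)*β + Real.sqrt ((s*lam+1)^2*β^2 + 4*s*lam*β^2*(VFCFS-1))) / (2*s)
    let μDM := fun s : ℝ => β * (lam + VPS/s)
    StrictAntiOn μSR (Set.Ioi 0) ∧ StrictAntiOn μDM (Set.Ioi 0) := by
  intro μSR μDM
  constructor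
  · intro s1 hs1 s2 hs2 h12
    simp only [Set.mem_Ioi] at hs1 hs2
    obtain ⟨hx, e1⟩ := key_root β lam VFCFS s1 hβ hlam hVF hs1
    obtain ⟨hy, e2⟩ := key_root β lam VFCFS s2 hβ hlam hVF hs2
    show μSR s2 < μSR s1
    simp only [μSR]
    set x : ℝ := ((s1*lam+1)*β + Real.sqrt ((s1*lam+1)^2*β^2 + 4*s1*lam*β^2*(VFCFS-1))) / (2*s1)
    set y : ℝ := ((s2*lam+1)*β + Real.sqrt ((s2*lam+1)^2*β^2 + 4*s2*lam*β^2*(VFCFS-1))) / (2*s2)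
    set c : ℝ := lam*β with hc
    set K : ℝ := lam*β^2*VFCFS with hK
    have hV0 : 0 < VFCFS := by linarith
    have hK0 : 0 < K := by rw [hK]; positivity
    have f1 : s1*x*(x - c) = β*(x - c) + K := by
      rw [hc, hK]; linear_combination e1
    have f2 : s2*y*(y - c) = β*(y - c) + K := by
      rw [hc, hK]; linear_combination e2
    have hPx : 0 < x*(x-c) := by
      have := sub_pos.mpr hx
      have hx0 : 0 < x := lt_trans (by positivity) hx
      positivity
    have hPy : 0 < y*(y-c) := by
      have := sub_pos.mpr hy
      have hy0 : 0 < y := lt_trans (by positivity) hy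
      positivity
    have hE : (s2 - s1)*(x*(x-c))*(y*(y-c))
        = (x - y)*(β*(x-c)*(y-c) + K*(x + y - c)) := by
      linear_combination (x*(x-c))*f2 - (y*(y-c))*f1
    have hL : 0 < (s2 - s1)*(x*(x-c))*(y*(y-c)) := by
      have : 0 < s2 - s1 := sub_pos.mpr h12
      positivity
    have hbr : 0 < β*(x-c)*(y-c) + K*(x + y - c) := by
      have h1 := sub_pos.mpr hx
      have h2 := sub_pos.mpr hy
      have hc0 : 0 < c := by rw [hc]; positivity
      have h3 : 0 < x + y - c := by linarith
      exact add_pos (mul_pos (mul_pos hβ h1) h2) (mul_pos hK0 h3)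
    nlinarith [hE, hL, hbr]
  · intro s1 hs1 s2 hs2 h12
    simp only [Set.mem_Ioi] at hs1 hs2
    show μDM s2 < μDM s1
    simp only [μDM]
    have : VPS / s2 < VPS / s1 := div_lt_div_of_pos_left hVP hs1 h12
    nlinarith
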